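/- Let ρ₁, ..., ρ_k be admissible semimetrics on a probability space (X, μ), each bounded by 1, and let ε ∈ (0,1) be such that ℍ_ε(X, μ, ρ_i) > 0 for all i. Then ℍ_{2√ε}(X, μ, (1/k) Σ_{i=1}^k ρ_i) ≤ 2 Σ_{i=1}^k ℍ_ε(X, μ, ρ_i). -/

import Mathlib

open MeasureTheory Filter Pointwise

section EpsEntropy

variable {α : Type*} [MeasurableSpace α]

/-- `k` works for an `ε`-cover: `X = X₀ ∪ … ∪ X_k` with `μ X₀ < ε` and `diam_ρ X_i < ε` for `i ≥ 1`. -/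
def IsEntCover (μ : Measure α) (ρ : α → α → ℝ) (ε : ℝ) (k : ℕ) : Prop :=
  ∃ A : Fin (k + 1) → Set α, (∀ i, MeasurableSet (A i)) ∧ (⋃ i, A i) = Set.univ ∧
    μ (A 0) < ENNReal.ofReal ε ∧
    ∀ i : Fin (k + 1), i ≠ 0 → ∀ x ∈ A i, ∀ y ∈ A i, ρ x y < ε

/-- The ε-entropy `ℍ_ε(X, μ, ρ) = log₂ k` for the minimal admissible `k`. -/
noncomputable def epsEntropy (μ : Measure α) (ρ : α → α → ℝ) (ε : ℝ) : ℝ :=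
  Real.logb 2 ((sInf {k : ℕ | 0 < k ∧ IsEntCover μ ρ ε k} : ℕ) : ℝ)

/-- A semimetric is admissible iff all of its `ε`-entropies are finite. -/
def Admissible (μ : Measure α) (ρ : α → α → ℝ) : Prop :=
  ∀ ε : ℝ, 0 < ε → ∃ k : ℕ, 0 < k ∧ IsEntCover μ ρ ε k

end EpsEntropy

set_option maxHeartbeats 2000000
/-- Lemma 2: for admissible semimetrics `ρ₁, …, ρ_k ≤ 1` and `ε ∈ (0,1)` with
`ℍ_ε(ρᵢ) > 0`, one has `ℍ_{2√ε}((1/k)Σρᵢ) ≤ 2 Σ ℍ_ε(ρᵢ)`. -/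
theorem epsEntropy_avg_le {X : Type*} [MeasurableSpace X]
    (μ : Measure X) [IsProbabilityMeasure μ]
    (k : ℕ) (hk : 0 < k) (ρ : Fin k → X → X → ℝ)
    (hnonneg : ∀ i x y, 0 ≤ ρ i x y)
    (hsymm : ∀ i x y, ρ i x y = ρ i y x)
    (htri : ∀ i x y z, ρ i x z ≤ ρ i x y + ρ i y z)
    (hbd : ∀ i x y, ρ i x y ≤ 1)
    (hadm : ∀ i, Admissible μ (ρ i))
    (ε : ℝ) (hε0 : 0 < ε) (hε1 : ε < 1)
    (hpos : ∀ i, 0 < epsEntropy μ (ρ i) ε) :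
    epsEntropy μ (fun x y => (k : ℝ)⁻¹ * ∑ i, ρ i x y) (2 * Real.sqrt ε)
      ≤ 2 * ∑ i, epsEntropy μ (ρ i) ε := by
  classical
  have hk' : (0 : ℝ) < k := by exact_mod_cast hk
  have hsq : 0 < Real.sqrt ε := Real.sqrt_pos.mpr hε0
  have hεsq : ε < Real.sqrt ε := by
    nlinarith [Real.sq_sqrt hε0.le, Real.sqrt_lt_sqrt hε0.le hε1, Real.sqrt_one]
  set m : Fin k → ℕ := fun i => sInf {n : ℕ | 0 < n ∧ IsEntCover μ (ρ i) ε n} with hm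
  have hmem : ∀ i, 0 < m i ∧ IsEntCover μ (ρ i) ε (m i) := fun i =>
    Nat.sInf_mem (hadm i ε hε0)
  have hent : ∀ i, epsEntropy μ (ρ i) ε = Real.logb 2 (m i) := fun i => rfl
  have hm2 : ∀ i, 2 ≤ m i := by
    intro i
    by_contra h
    have h1 : m i = 1 := by have := (hmem i).1; omega
    have := hpos i
    rw [hent i, h1] at this
    simp [Real.logb] at this
  -- choose covers
  choose A hAmeas hAcov hA0 hAdiam using fun i => (hmem i).2
  -- the set of points only covered by the bad part
  set D : Fin k → Set X := fun i => (⋃ (j : Fin (m i + 1)) (_ : j ≠ 0), A i j)ᶜ with hD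
  have hDmeas : ∀ i, MeasurableSet (D i) :=
    fun i => (MeasurableSet.iUnion fun j => MeasurableSet.iUnion fun _ => hAmeas i j).compl
  have hDsub : ∀ i, D i ⊆ A i 0 := by
    intro i x hx
    have hxu : x ∈ ⋃ j, A i j := by rw [hAcov i]; trivial
    simp only [Set.mem_iUnion] at hxu
    obtain ⟨j, hj⟩ := hxu
    rcases eq_or_ne j 0 with rfl | hne
    · exact hj
    · exact absurd (Set.mem_iUnion.mpr ⟨j, Set.mem_iUnion.mpr ⟨hne, hj⟩⟩) hx
  have hDmeasure : ∀ i, μ (D i) < ENNReal.ofReal ε :=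
    fun i => lt_of_le_of_lt (measure_mono (hDsub i)) (hA0 i)
  -- the new bad set, via Markov's inequality
  set f : X → ENNReal := fun x => ∑ i, (D i).indicator 1 x with hf
  have hfmeas : Measurable f :=
    Finset.measurable_sum _ fun i _ => (measurable_const.indicator (hDmeas i))
  set c : ENNReal := ENNReal.ofReal (Real.sqrt ε * k) with hc
  have hc0 : c ≠ 0 := by
    simp only [hc, ne_eq, ENNReal.ofReal_eq_zero, not_le]
    positivity
  have hcT : c ≠ ⊤ := ENNReal.ofReal_ne_top
  set T : Set X := {x | c ≤ f x} with hT
  have hTmeas : MeasurableSet T := hfmeas measurableSet_Ici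
  have hfcard : ∀ x, f x = ((Finset.univ.filter fun i => x ∈ D i).card : ENNReal) := by
    intro x
    rw [hf]
    simp only
    rw [Finset.sum_indicator_eq_sum_filter]
    simp
  have hTsmall : μ T < ENNReal.ofReal (2 * Real.sqrt ε) := by
    have hmarkov : c * μ T ≤ ∫⁻ a, f a ∂μ :=
      mul_meas_ge_le_lintegral₀ hfmeas.aemeasurable c
    have hint : ∫⁻ a, f a ∂μ = ∑ i, μ (D i) := by
      calc ∫⁻ a, f a ∂μ = ∑ i, ∫⁻ a, (D i).indicator 1 a ∂μ := by
            rw [hf]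
            exact lintegral_finset_sum _ fun i _ => measurable_const.indicator (hDmeas i)
        _ = ∑ i, μ (D i) := Finset.sum_congr rfl fun i _ => lintegral_indicator_one (hDmeas i)
    have hsum : ∑ i, μ (D i) ≤ ENNReal.ofReal (Real.sqrt ε * k) * ENNReal.ofReal (Real.sqrt ε) := by
      calc ∑ i, μ (D i) ≤ ∑ _i : Fin k, ENNReal.ofReal ε :=
            Finset.sum_le_sum fun i _ => (hDmeasure i).le
        _ = (k : ENNReal) * ENNReal.ofReal ε := by
            rw [Finset.sum_const, Finset.card_univ, Fintype.card_fin, nsmul_eq_mul]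
        _ = ENNReal.ofReal (Real.sqrt ε * k) * ENNReal.ofReal (Real.sqrt ε) := by
            rw [← ENNReal.ofReal_mul (by positivity), ← ENNReal.ofReal_natCast k,
              ← ENNReal.ofReal_mul (by positivity)]
            congr 1
            nlinarith [Real.sq_sqrt hε0.le]
    have hμT : μ T ≤ ENNReal.ofReal (Real.sqrt ε) := by
      rw [← ENNReal.mul_le_mul_iff_right hc0 hcT]
      exact hmarkov.trans (hint.le.trans hsum)
    refine lt_of_le_of_lt hμT ?_
    rw [ENNReal.ofReal_lt_ofReal_iff (by positivity)]
    linarith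
  -- cells
  set E : ∀ i : Fin k, Fin (m i + 1) → Set X := fun i j => if j = 0 then D i else A i j with hE
  have hEmeas : ∀ i j, MeasurableSet (E i j) := by
    intro i j
    simp only [hE]
    split_ifs
    · exact hDmeas i
    · exact hAmeas i j
  set C : (∀ i : Fin k, Fin (m i + 1)) → Set X := fun g => ⋂ i, E i (g i) with hC
  have hCmeas : ∀ g, MeasurableSet (C g) := fun g => MeasurableSet.iInter fun i => hEmeas i (g i)
  set Good : (∀ i : Fin k, Fin (m i + 1)) → Prop :=
    fun g => ((Finset.univ.filter fun i => g i = 0).card : ℝ) < Real.sqrt ε * k with hGood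
  set N : ℕ := ∏ i, (m i + 1) with hN
  have hNcard : Fintype.card (∀ i : Fin k, Fin (m i + 1)) = N := by
    rw [Fintype.card_pi]; simp [hN]
  set e : (∀ i : Fin k, Fin (m i + 1)) ≃ Fin N := Fintype.equivFinOfCardEq hNcard with he
  set A' : Fin (N + 1) → Set X :=
    Fin.cases T (fun j => if Good (e.symm j) then C (e.symm j) else ∅) with hA'
  have hcover : IsEntCover μ (fun x y => (k : ℝ)⁻¹ * ∑ i, ρ i x y) (2 * Real.sqrt ε) N := by
    refine ⟨A', ?_, ?_, ?_, ?_⟩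
    · intro i
      induction i using Fin.cases with
      | zero => simpa [hA'] using hTmeas
      | succ j =>
        simp only [hA', Fin.cases_succ]
        split_ifs
        · exact hCmeas _
        · exact MeasurableSet.empty
    · rw [Set.eq_univ_iff_forall]
      intro x
      rw [Set.mem_iUnion]
      by_cases hx : x ∈ T
      · exact ⟨0, by simpa [hA'] using hx⟩
      · have hsel : ∀ i, ∃ j : Fin (m i + 1), x ∈ E i j ∧ (j = 0 → x ∈ D i) := by
          intro i
          by_cases hxD : x ∈ D i
          · exact ⟨0, by simp [hE, hxD], fun _ => hxD⟩
          · have : x ∈ ⋃ (j : Fin (m i + 1)) (_ : j ≠ 0), A i j := by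
              by_contra hcon; exact hxD hcon
            simp only [Set.mem_iUnion] at this
            obtain ⟨j, hj, hxj⟩ := this
            exact ⟨j, by simp [hE, hj, hxj], fun h => absurd h hj⟩
        choose g hg1 hg2 using hsel
        have hxC : x ∈ C g := Set.mem_iInter.mpr fun i => hg1 i
        have hGg : Good g := by
          have hsub : (Finset.univ.filter fun i => g i = 0) ⊆
              (Finset.univ.filter fun i => x ∈ D i) := by
            intro i hi
            simp only [Finset.mem_filter, Finset.mem_univ, true_and] at hi ⊢
            exact hg2 i hi
          have hcard := Finset.card_le_card hsub
          have hxT : f x < c := by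
            rw [hT] at hx
            simpa using lt_of_not_ge hx
          rw [hfcard x, hc] at hxT
          rw [← ENNReal.ofReal_natCast] at hxT
          rw [ENNReal.ofReal_lt_ofReal_iff_of_nonneg (by positivity)] at hxT
          rw [hGood]
          calc ((Finset.univ.filter fun i => g i = 0).card : ℝ)
              ≤ ((Finset.univ.filter fun i => x ∈ D i).card : ℝ) := by exact_mod_cast hcard
            _ < Real.sqrt ε * k := hxT
        refine ⟨(e g).succ, ?_⟩
        simp only [hA', Fin.cases_succ, Equiv.symm_apply_apply, hGg, if_true]
        exact hxC
    · simpa [hA'] using hTsmall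
    · intro i hi x hx y hy
      obtain ⟨j, rfl⟩ := Fin.eq_succ_of_ne_zero hi
      simp only [hA', Fin.cases_succ] at hx hy
      by_cases hg : Good (e.symm j)
      · rw [if_pos hg] at hx hy
        set g := e.symm j with hgdef
        have hxE : ∀ i', x ∈ E i' (g i') := fun i' => Set.mem_iInter.mp hx i'
        have hyE : ∀ i', y ∈ E i' (g i') := fun i' => Set.mem_iInter.mp hy i'
        have hterm : ∀ i', ρ i' x y ≤ if g i' = 0 then (1 : ℝ) else ε := by
          intro i'
          split_ifs with h0
          · exact hbd i' x y
          · have hx' : x ∈ A i' (g i') := by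
              have := hxE i'; simp only [hE] at this; rwa [if_neg h0] at this
            have hy' : y ∈ A i' (g i') := by
              have := hyE i'; simp only [hE] at this; rwa [if_neg h0] at this
            exact (hAdiam i' (g i') h0 x hx' y hy').le
        set Z : ℕ := (Finset.univ.filter fun i' => g i' = 0).card with hZ
        have hZlt : (Z : ℝ) < Real.sqrt ε * k := hg
        have hsumle : ∑ i', ρ i' x y ≤ (Z : ℝ) + k * ε := by
          calc ∑ i', ρ i' x y ≤ ∑ i', (if g i' = 0 then (1 : ℝ) else ε) :=
                Finset.sum_le_sum fun i' _ => hterm i'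
            _ = (Finset.univ.filter fun i' => g i' = 0).card * (1 : ℝ)
                + (Finset.univ.filter fun i' => ¬ g i' = 0).card * ε := by
                rw [Finset.sum_ite, Finset.sum_const, Finset.sum_const,
                  nsmul_eq_mul, nsmul_eq_mul]
            _ ≤ (Z : ℝ) + k * ε := by
                rw [mul_one]
                have hle : ((Finset.univ.filter fun i' => ¬ g i' = 0).card : ℝ) ≤ k := by
                  have := Finset.card_filter_le Finset.univ (fun i' => ¬ g i' = 0)
                  rw [Finset.card_univ, Fintype.card_fin] at this
                  exact_mod_cast this
                nlinarith
        calc (k : ℝ)⁻¹ * ∑ i', ρ i' x y ≤ (k : ℝ)⁻¹ * ((Z : ℝ) + k * ε) :=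
              mul_le_mul_of_nonneg_left hsumle (by positivity)
          _ < (k : ℝ)⁻¹ * (Real.sqrt ε * k + k * ε) :=
              mul_lt_mul_of_pos_left (by linarith) (by positivity)
          _ = Real.sqrt ε + ε := by field_simp
          _ < 2 * Real.sqrt ε := by linarith
      · rw [if_neg hg] at hx
        exact absurd hx (Set.notMem_empty x)
  -- conclude
  have hNpos : 0 < N := Finset.prod_pos fun i _ => Nat.succ_pos _
  set M : ℕ := sInf {n : ℕ | 0 < n ∧
      IsEntCover μ (fun x y => (k : ℝ)⁻¹ * ∑ i, ρ i x y) (2 * Real.sqrt ε) n} with hM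
  have hMN : M ≤ N := Nat.sInf_le ⟨hNpos, hcover⟩
  have hne' : {n : ℕ | 0 < n ∧
      IsEntCover μ (fun x y => (k : ℝ)⁻¹ * ∑ i, ρ i x y) (2 * Real.sqrt ε) n}.Nonempty :=
    ⟨N, hNpos, hcover⟩
  have hMpos : 0 < M := (Nat.sInf_mem hne').1
  have hNle : N ≤ ∏ i, (m i) ^ 2 := by
    apply Finset.prod_le_prod'
    intro i _
    have := hm2 i
    nlinarith
  have hgoal : epsEntropy μ (fun x y => (k : ℝ)⁻¹ * ∑ i, ρ i x y) (2 * Real.sqrt ε)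
      = Real.logb 2 (M : ℝ) := rfl
  rw [hgoal]
  have step1 : Real.logb 2 (M : ℝ) ≤ Real.logb 2 ((∏ i, (m i) ^ 2 : ℕ) : ℝ) := by
    apply Real.logb_le_logb_of_le one_lt_two (by exact_mod_cast hMpos)
    exact_mod_cast hMN.trans hNle
  refine step1.trans ?_
  have hcast : ((∏ i, (m i) ^ 2 : ℕ) : ℝ) = ∏ i, ((m i : ℝ)) ^ 2 := by push_cast; ring
  rw [hcast]
  have hne : ∀ i ∈ Finset.univ, ((m i : ℝ)) ^ 2 ≠ 0 := by
    intro i _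
    have := hm2 i
    positivity
  rw [Real.logb, Real.log_prod hne, Finset.sum_div, Finset.mul_sum]
  apply le_of_eq
  apply Finset.sum_congr rfl
  intro i _
  rw [hent i, Real.logb, Real.log_pow]
  push_cast
  ring
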